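/- arXiv:1011.3329 — 3 statements merged into one kernel-verified Lean document; each statement's English description precedes it below -/
import Mathlib

section
/- For every strict partition λ, one has Σ_{κ: κ ↘ λ} q_α(κ/λ)² − Σ_{μ: μ ↗ λ} q_α(λ/μ)² = 2|λ| + α/2, where q_α(i,j)² = 2^{−δ(j−i)} ( (j−i)(j−i+1) + α ), the sums run over strict partitions κ obtained from λ by adding one box and μ obtained from λ by removing one box, and for a box □ = (i,j) in row i and column j, δ(j−i) is 1 if j = i and 0 otherwise. -/
open scoped BigOperators

/-- A strict partition: a strictly decreasing list of positive integers. -/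
def SPart : Type := {l : List ℕ // l.Pairwise (· > ·) ∧ ∀ x ∈ l, 0 < x}

namespace SPart

/-- The weight `|λ|`: the sum of the parts. -/
def weight (lam : SPart) : ℕ := lam.1.sum

/-- The shifted Young diagram of a strict partition: row `k` (1-indexed) has
`λ_k` boxes `(k, j)` with `k ≤ j < k + λ_k`. -/
def diagram (lam : SPart) : Set (ℕ × ℕ) :=
  {p | ∃ k : Fin lam.1.length,
    p.1 = (k : ℕ) + 1 ∧ (k : ℕ) + 1 ≤ p.2 ∧ p.2 < (k : ℕ) + 1 + lam.1.get k}

/-- `AddBox μ λ b`: the shifted diagram of `λ` is obtained from that of `μ` by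
adding the single box `b`. -/
def AddBox (mu lam : SPart) (b : ℕ × ℕ) : Prop :=
  b ∉ mu.diagram ∧ lam.diagram = insert b mu.diagram

/-- `Covers μ λ`: `λ` is obtained from `μ` by adding one box (an edge `μ ↗ λ`
of the Schur graph). -/
def Covers (mu lam : SPart) : Prop := ∃ b, AddBox mu lam b

/-- The empty strict partition. -/
def empty : SPart := ⟨[], List.Pairwise.nil, by simp⟩

end SPart

/-- `q_α(i,j)² = 2^{-δ(j-i)} ((j-i)(j-i+1) + α)` for a box `b = (i,j)`. -/
noncomputable def qsq (α : ℝ) (b : ℕ × ℕ) : ℝ :=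
  (if b.2 = b.1 then (2 : ℝ)⁻¹ else 1) *
    (((b.2 : ℝ) - (b.1 : ℝ)) * (((b.2 : ℝ) - (b.1 : ℝ)) + 1) + α)

namespace SPartProof

/-- entry function of a list, 0 beyond the end -/
def E (l : List ℕ) (k : ℕ) : ℕ := l.getD k 0

lemma E_pos_iff {lam : SPart} {k : ℕ} : 0 < E lam.1 k ↔ k < lam.1.length := by
  constructor
  · intro h
    by_contra hk
    rw [E, List.getD_eq_default _ _ (le_of_not_gt hk)] at h
    exact lt_irrefl 0 h
  · intro h
    rw [E, List.getD_eq_getElem _ _ h]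
    exact lam.2.2 _ (List.getElem_mem h)

lemma E_strict {lam : SPart} {i j : ℕ} (hij : i < j) (hj : j < lam.1.length) :
    E lam.1 j < E lam.1 i := by
  rw [E, E, List.getD_eq_getElem _ _ hj, List.getD_eq_getElem _ _ (hij.trans hj)]
  exact List.pairwise_iff_get.1 lam.2.1 ⟨i, hij.trans hj⟩ ⟨j, hj⟩ hij

lemma mem_diagram {lam : SPart} {p : ℕ × ℕ} :
    p ∈ lam.diagram ↔ 1 ≤ p.1 ∧ p.1 ≤ p.2 ∧ p.2 < p.1 + E lam.1 (p.1 - 1) := by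
  constructor
  · rintro ⟨k, h1, h2, h3⟩
    have hk : (k : ℕ) < lam.1.length := k.2
    rw [E, h1]
    simp only [Nat.add_sub_cancel]
    rw [List.getD_eq_getElem _ _ hk]
    exact ⟨by omega, h2, by simpa using h3⟩
  · rintro ⟨h1, h2, h3⟩
    have hp : 0 < E lam.1 (p.1 - 1) := by omega
    have hk : p.1 - 1 < lam.1.length := E_pos_iff.1 hp
    refine ⟨⟨p.1 - 1, hk⟩, by simp; omega, by simp; omega, ?_⟩
    simp only [List.get_eq_getElem]
    rw [E, List.getD_eq_getElem _ _ hk] at h3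
    omega

lemma eq_of_E_eq {lam mu : SPart} (h : ∀ k, E lam.1 k = E mu.1 k) : lam = mu := by
  apply Subtype.ext
  have hlen : lam.1.length = mu.1.length := by
    have h1 : ∀ k, k < lam.1.length ↔ k < mu.1.length := fun k => by
      rw [← E_pos_iff (lam := lam), ← E_pos_iff (lam := mu), h k]
    by_contra hne
    rcases Nat.lt_or_ge lam.1.length mu.1.length with hc | hc
    · exact absurd ((h1 lam.1.length).2 hc) (lt_irrefl _)
    · rcases lt_of_le_of_ne hc (fun e => hne e.symm) with hc'
      exact absurd ((h1 mu.1.length).1 hc') (lt_irrefl _)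
  refine List.ext_get hlen fun i hi hi' => ?_
  have := h i
  rw [E, E, List.getD_eq_getElem _ _ hi, List.getD_eq_getElem _ _ hi'] at this
  simpa using this

lemma interval_eq {c a b : ℕ} (h : ∀ y, (c ≤ y ∧ y < c + a) ↔ (c ≤ y ∧ y < c + b)) :
    a = b := by
  have h1 := h (c + a)
  have h2 := h (c + b)
  omega

/-- The key characterization of `AddBox` in terms of entry functions. -/
lemma addBox_iff {mu kap : SPart} {b : ℕ × ℕ} :
    SPart.AddBox mu kap b ↔
      1 ≤ b.1 ∧ b.2 = b.1 + E mu.1 (b.1 - 1) ∧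
      ∀ j, E kap.1 j = if j = b.1 - 1 then E mu.1 j + 1 else E mu.1 j := by
  constructor
  · rintro ⟨hnot, heq⟩
    have hb : b ∈ kap.diagram := by rw [heq]; exact Set.mem_insert _ _
    rw [mem_diagram] at hb hnot
    obtain ⟨hb1, hb2, hb3⟩ := hb
    have hmem : ∀ p : ℕ × ℕ, p ∈ kap.diagram ↔ p = b ∨ p ∈ mu.diagram := by
      intro p; rw [heq]; exact Set.mem_insert_iff
    set k := b.1 - 1 with hk
    have hstar : b.1 + E mu.1 k ≤ b.2 := by omega
    have hrow : ∀ j y, (j + 1 ≤ y ∧ y < j + 1 + E kap.1 j) ↔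
        ((j + 1, y) = b ∨ (j + 1 ≤ y ∧ y < j + 1 + E mu.1 j)) := by
      intro j y
      have := hmem (j + 1, y)
      rw [mem_diagram, mem_diagram] at this
      simpa using this
    have hoff : ∀ j, j ≠ k → E kap.1 j = E mu.1 j := by
      intro j hj
      apply interval_eq (c := j + 1)
      intro y
      have := hrow j y
      have hne : (j + 1, y) ≠ b := by
        intro e
        apply hj
        have : j + 1 = b.1 := congrArg Prod.fst e
        omega
      tauto
    have hrk : ∀ y, (k + 1 ≤ y ∧ y < k + 1 + E kap.1 k) ↔
        (y = b.2 ∨ (k + 1 ≤ y ∧ y < k + 1 + E mu.1 k)) := by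
      intro y
      have := hrow k y
      have : ((k + 1, y) = b) ↔ y = b.2 := by
        constructor
        · intro e; exact congrArg Prod.snd e
        · intro e; rw [e]; ext <;> simp <;> omega
      · rw [← this]; exact hrow k y
    have e1 := hrk (k + 1 + E mu.1 k)
    have e2 := hrk (k + 1 + E mu.1 k + 1)
    have e3 := hrk b.2
    have hA : E kap.1 k = E mu.1 k + 1 ∧ b.2 = k + 1 + E mu.1 k := by omega
    refine ⟨hb1, by omega, fun j => ?_⟩
    by_cases hj : j = k
    · rw [if_pos hj, hj]; exact hA.1
    · rw [if_neg hj]; exact hoff j hj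
  · rintro ⟨h1, h2, h3⟩
    constructor
    · rw [mem_diagram]; omega
    · ext p
      rw [Set.mem_insert_iff, mem_diagram, mem_diagram]
      by_cases hp : p = b
      · subst hp
        simp only [true_or, iff_true]
        have := h3 (p.1 - 1)
        rw [if_pos rfl] at this
        omega
      · have hne : ¬ (p = b) := hp
        simp only [hne, false_or]
        by_cases hj : p.1 - 1 = b.1 - 1
        · have hE := h3 (p.1 - 1)
          rw [if_pos hj] at hE
          constructor
          · rintro ⟨q1, q2, q3⟩
            refine ⟨q1, q2, ?_⟩
            have hp1 : p.1 = b.1 := by omega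
            have hne2 : p.2 ≠ b.2 := by
              intro e; exact hne (Prod.ext hp1 e)
            have h2' : b.2 = b.1 + E mu.1 (p.1 - 1) := by rw [hj]; exact h2
            omega
          · rintro ⟨q1, q2, q3⟩
            exact ⟨q1, q2, by omega⟩
        · have hE := h3 (p.1 - 1)
          rw [if_neg hj] at hE
          omega

/-! ### Constructing strict partitions from entry functions -/

def mkList (g : ℕ → ℕ) (n : ℕ) : List ℕ := (List.range n).map g

lemma mkList_length (g : ℕ → ℕ) (n : ℕ) : (mkList g n).length = n := by simp [mkList]

lemma E_mkList (g : ℕ → ℕ) (n : ℕ) (h0 : ∀ k, n ≤ k → g k = 0) (k : ℕ) :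
    E (mkList g n) k = g k := by
  by_cases hk : k < n
  · rw [E, List.getD_eq_getElem _ _ (by simpa [mkList_length] using hk)]
    simp [mkList]
  · rw [E, List.getD_eq_default _ _ (by simpa [mkList_length] using le_of_not_gt hk)]
    exact (h0 k (le_of_not_gt hk)).symm

def mk (g : ℕ → ℕ) (n : ℕ) (hdec : ∀ i j, i < j → j < n → g j < g i)
    (hpos : ∀ k, k < n → 0 < g k) : SPart := by
  refine ⟨mkList g n, ?_, ?_⟩
  · refine List.pairwise_iff_get.2 fun i j hij => ?_
    have hj : (j : ℕ) < n := by have := j.2; simpa [mkList_length] using this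
    rw [List.get_eq_getElem, List.get_eq_getElem]
    simp only [mkList, List.get_eq_getElem, List.getElem_map, List.getElem_range]
    exact hdec _ _ hij hj
  · intro x hx
    simp only [mkList, List.mem_map, List.mem_range] at hx
    obtain ⟨i, hi, rfl⟩ := hx
    exact hpos i hi

lemma E_zero {lam : SPart} {k : ℕ} (h : lam.1.length ≤ k) : E lam.1 k = 0 :=
  List.getD_eq_default _ _ h

/-- addability condition for row index `k` (0-indexed) -/
def condA (l : List ℕ) (k : ℕ) : Prop := k = 0 ∨ E l (k - 1) ≥ E l k + 2

/-- removability condition for row index `k` (0-indexed) -/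
def condR (l : List ℕ) (k : ℕ) : Prop := E l k = 1 ∨ E l k ≥ E l (k + 1) + 2

lemma condA_le {lam : SPart} {k : ℕ} (h : condA lam.1 k) : k ≤ lam.1.length := by
  rcases h with h | h
  · omega
  · by_contra hk
    rw [E_zero (by omega)] at h
    omega

lemma condR_lt {lam : SPart} {k : ℕ} (h : condR lam.1 k) : k < lam.1.length := by
  have h1 : 0 < E lam.1 k := by rcases h with h | h <;> omega
  exact E_pos_iff.1 h1

lemma exists_add {lam : SPart} {k : ℕ} (h : condA lam.1 k) :
    ∃ kap : SPart, SPart.AddBox lam kap (k + 1, k + 1 + E lam.1 k) := by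
  set m := lam.1.length with hm
  have hkm : k ≤ m := condA_le h
  set g : ℕ → ℕ := fun j => if j = k then E lam.1 j + 1 else E lam.1 j with hg
  have hgk : g k = E lam.1 k + 1 := by simp [hg]
  have hgo : ∀ j, j ≠ k → g j = E lam.1 j := fun j hj => by simp [hg, hj]
  obtain ⟨n, hn⟩ : ∃ n : ℕ, (k = m ∧ n = m + 1) ∨ (k < m ∧ n = m) := by
    by_cases hc : k = m
    · exact ⟨m + 1, Or.inl ⟨hc, rfl⟩⟩
    · exact ⟨m, Or.inr ⟨by omega, rfl⟩⟩
  have hkn : k < n := by omega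
  have h0 : ∀ j, n ≤ j → g j = 0 := by
    intro j hj
    rw [hgo j (by omega)]
    exact E_zero (by omega)
  have hjm : ∀ j, j < n → j ≠ k → j < m := by intro j h1 h2; omega
  have hdec : ∀ i j, i < j → j < n → g j < g i := by
    intro i j hij hjn
    by_cases hjk : j = k
    · subst hjk
      have hcond : E lam.1 (j - 1) ≥ E lam.1 j + 2 := by
        rcases h with h | h; · omega
        · exact h
      have hi : E lam.1 (j - 1) ≤ E lam.1 i := by
        rcases Nat.eq_or_lt_of_le (Nat.le_sub_one_of_lt hij) with he | hl
        · rw [he]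
        · exact le_of_lt (E_strict (lam := lam) hl (by omega))
      rw [hgk, hgo i (by omega)]
      omega
    · have hjm' : j < m := hjm j hjn hjk
      rw [hgo j hjk]
      by_cases hik : i = k
      · rw [hik, hgk]
        have := E_strict (lam := lam) (show k < j by omega) hjm'
        omega
      · rw [hgo i hik]
        exact E_strict (lam := lam) hij hjm'
  have hpos : ∀ j, j < n → 0 < g j := by
    intro j hjn
    by_cases hjk : j = k
    · rw [hjk, hgk]; omega
    · rw [hgo j hjk]
      exact E_pos_iff.2 (hjm j hjn hjk)
  refine ⟨mk g n hdec hpos, ?_⟩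
  rw [addBox_iff]
  have hE : ∀ j, E (mk g n hdec hpos).1 j = g j := fun j => E_mkList g n h0 j
  refine ⟨by omega, by simp, fun j => ?_⟩
  rw [hE j]
  simp only [Nat.add_sub_cancel, hg]

lemma exists_rem {lam : SPart} {k : ℕ} (h : condR lam.1 k) :
    ∃ mu : SPart, SPart.AddBox mu lam (k + 1, k + E lam.1 k) := by
  set m := lam.1.length with hm
  have hkm : k < m := condR_lt h
  have hEk : 1 ≤ E lam.1 k := by rcases h with h | h <;> omega
  set g : ℕ → ℕ := fun j => if j = k then E lam.1 j - 1 else E lam.1 j with hg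
  have hgk : g k = E lam.1 k - 1 := by simp [hg]
  have hgo : ∀ j, j ≠ k → g j = E lam.1 j := fun j hj => by simp [hg, hj]
  have hlast : E lam.1 k = 1 → k = m - 1 := by
    intro h1
    by_contra hc
    have hk1 : k + 1 < m := by omega
    have hs := E_strict (lam := lam) (show k < k + 1 by omega) hk1
    have hp := E_pos_iff.2 hk1
    omega
  obtain ⟨n, hn⟩ : ∃ n : ℕ, (E lam.1 k = 1 ∧ k = m - 1 ∧ n = m - 1) ∨
      (2 ≤ E lam.1 k ∧ n = m) := by
    by_cases hc : E lam.1 k = 1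
    · exact ⟨m - 1, Or.inl ⟨hc, hlast hc, rfl⟩⟩
    · exact ⟨m, Or.inr ⟨by omega, rfl⟩⟩
  have hnm : n ≤ m := by omega
  have h0 : ∀ j, n ≤ j → g j = 0 := by
    intro j hj
    by_cases hjk : j = k
    · subst hjk
      rw [hgk]
      rcases hn with ⟨h1, _, h3⟩ | ⟨h1, h2⟩
      · omega
      · have : j < n := by omega
        omega
    · rw [hgo j hjk]
      refine E_zero ?_
      rcases hn with ⟨h1, h2, h3⟩ | ⟨h1, h2⟩
      · omega
      · omega
  have hdec : ∀ i j, i < j → j < n → g j < g i := by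
    intro i j hij hjn
    by_cases hjk : j = k
    · subst hjk
      rw [hgk, hgo i (by omega)]
      have := E_strict (lam := lam) hij hkm
      omega
    · rw [hgo j hjk]
      have hjm' : j < m := by omega
      by_cases hik : i = k
      · have h2 : 2 ≤ E lam.1 k := by
          rcases hn with ⟨h1, h2', h3⟩ | ⟨h1, h2'⟩ <;> omega
        have hcond : E lam.1 k ≥ E lam.1 (k + 1) + 2 := by
          rcases h with h' | h'; · omega
          · exact h'
        have hj1 : E lam.1 j ≤ E lam.1 (k + 1) := by
          have hkj : k + 1 ≤ j := by omega
          rcases Nat.eq_or_lt_of_le hkj with he | hl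
          · rw [← he]
          · exact le_of_lt (E_strict (lam := lam) hl hjm')
        rw [hik, hgk]
        omega
      · rw [hgo i hik]
        exact E_strict (lam := lam) hij hjm'
  have hpos : ∀ j, j < n → 0 < g j := by
    intro j hjn
    by_cases hjk : j = k
    · subst hjk
      rw [hgk]
      rcases hn with ⟨h1, h2, h3⟩ | ⟨h1, h2⟩ <;> omega
    · rw [hgo j hjk]
      exact E_pos_iff.2 (by omega)
  refine ⟨mk g n hdec hpos, ?_⟩
  rw [addBox_iff]
  have hE : ∀ j, E (mk g n hdec hpos).1 j = g j := fun j => E_mkList g n h0 j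
  simp only [Nat.add_sub_cancel]
  refine ⟨by omega, ?_, fun j => ?_⟩
  · rw [hE k, hgk]; omega
  · rw [hE j]
    by_cases hjk : j = k
    · rw [if_pos hjk, hjk, hgk]; omega
    · rw [if_neg hjk, hgo j hjk]

/-! ### Forward direction: shapes of added/removed boxes -/

lemma add_box_shape {lam kap : SPart} {b : ℕ × ℕ} (h : SPart.AddBox lam kap b) :
    ∃ k, b = (k + 1, k + 1 + E lam.1 k) ∧ condA lam.1 k := by
  rw [addBox_iff] at h
  obtain ⟨h1, h2, h3⟩ := h
  set k := b.1 - 1 with hk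
  refine ⟨k, Prod.ext (by omega) (by omega), ?_⟩
  by_cases hk0 : k = 0
  · exact Or.inl hk0
  · right
    have hkk := h3 k
    rw [if_pos rfl] at hkk
    have hklen : k < kap.1.length := E_pos_iff.1 (by omega)
    have hst := E_strict (lam := kap) (show k - 1 < k by omega) hklen
    have hk1 := h3 (k - 1)
    rw [if_neg (by omega)] at hk1
    omega

lemma rem_box_shape {mu lam : SPart} {b : ℕ × ℕ} (h : SPart.AddBox mu lam b) :
    ∃ k, b = (k + 1, k + E lam.1 k) ∧ condR lam.1 k := by
  rw [addBox_iff] at h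
  obtain ⟨h1, h2, h3⟩ := h
  set k := b.1 - 1 with hk
  have hkk := h3 k
  rw [if_pos rfl] at hkk
  refine ⟨k, Prod.ext (by omega) (by omega), ?_⟩
  by_cases h0 : E mu.1 k = 0
  · exact Or.inl (by omega)
  · right
    have hk1 := h3 (k + 1)
    rw [if_neg (by omega)] at hk1
    by_cases h1 : E mu.1 (k + 1) = 0
    · omega
    · have hklen : k + 1 < mu.1.length := E_pos_iff.1 (by omega)
      have hst := E_strict (lam := mu) (show k < k + 1 by omega) hklen
      omega

lemma diagram_inj {a b : SPart} (h : a.diagram = b.diagram) : a = b := by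
  apply eq_of_E_eq
  intro k
  apply interval_eq (c := k + 1)
  intro y
  have h1 : ((k + 1, y) ∈ a.diagram) ↔ ((k + 1, y) ∈ b.diagram) := by rw [h]
  rw [mem_diagram, mem_diagram] at h1
  simpa using h1

instance (l : List ℕ) : DecidablePred (condA l) := fun k => by
  unfold condA; exact inferInstance

instance (l : List ℕ) : DecidablePred (condR l) := fun k => by
  unfold condR; exact inferInstance

/-! ### The value of `qsq` on boxes -/

noncomputable def fA (α : ℝ) (e : ℕ) : ℝ := if e = 0 then α / 2 else (e : ℝ) * (e + 1) + α

lemma qsq_add (α : ℝ) (k e : ℕ) : qsq α (k + 1, k + 1 + e) = fA α e := by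
  simp only [qsq]
  by_cases he : e = 0
  · subst he
    rw [fA, if_pos rfl, if_pos (by omega)]
    push_cast
    ring
  · rw [fA, if_neg he, if_neg (by omega)]
    push_cast
    ring

lemma qsq_rem (α : ℝ) (k e : ℕ) (he : 1 ≤ e) : qsq α (k + 1, k + e) = fA α (e - 1) := by
  simp only [qsq]
  by_cases h1 : e = 1
  · subst h1
    rw [if_pos (by omega), fA, if_pos (by omega)]
    push_cast
    ring
  · rw [if_neg (by omega), fA, if_neg (by omega), Nat.cast_sub he]
    push_cast
    ring

lemma fA_diff (α : ℝ) {e : ℕ} (he : 2 ≤ e) : fA α e - fA α (e - 1) = 2 * e := by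
  rw [fA, fA, if_neg (by omega), if_neg (by omega), Nat.cast_sub (by omega : 1 ≤ e)]
  push_cast
  ring

/-! ### The key telescoping identity -/

lemma key (α : ℝ) (l : List ℕ) (hs : l.Pairwise (· > ·)) (hp : ∀ x ∈ l, 0 < x) :
    (∑ k ∈ Finset.range (l.length + 1), if condA l k then fA α (E l k) else 0)
      - (∑ k ∈ Finset.range l.length, if condR l k then fA α (E l k - 1) else 0)
    = 2 * (l.sum : ℝ) + α / 2 := by
  induction l with
  | nil => simp [condA, condR, E, fA]
  | cons a t ih =>
    have hs' : t.Pairwise (· > ·) := (List.pairwise_cons.1 hs).2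
    have hp' : ∀ x ∈ t, 0 < x := fun x hx => hp x (List.mem_cons_of_mem a hx)
    have ha : 0 < a := hp a List.mem_cons_self
    have hat : E t 0 < a := by
      cases t with
      | nil => simpa [E] using ha
      | cons b t' =>
        have := (List.pairwise_cons.1 hs).1 b List.mem_cons_self
        simpa [E] using this
    have ih' := ih hs' hp'
    have hA : (∑ k ∈ Finset.range ((a :: t).length + 1),
          if condA (a :: t) k then fA α (E (a :: t) k) else 0)
        = (∑ k ∈ Finset.range (t.length + 1), if condA t k then fA α (E t k) else 0)
          - fA α (E t 0) + (if E t 0 + 2 ≤ a then fA α (E t 0) else 0) + fA α a := by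
      simp only [List.length_cons]
      rw [Finset.sum_range_succ' _ (t.length + 1),
        Finset.sum_range_succ' (fun k => if condA (a :: t) (k + 1) then fA α (E (a :: t) (k + 1)) else 0) t.length,
        Finset.sum_range_succ' (fun k => if condA t k then fA α (E t k) else 0) t.length]
      have h0 : (if condA (a :: t) 0 then fA α (E (a :: t) 0) else 0) = fA α a := by
        simp [condA, E]
      have h1 : (if condA (a :: t) 1 then fA α (E (a :: t) 1) else 0)
          = (if E t 0 + 2 ≤ a then fA α (E t 0) else 0) := by
        simp only [condA, E, List.getD_cons_succ, List.getD_cons_zero]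
        norm_num [ge_iff_le]
      have h2 : ∀ k, (if condA (a :: t) (k + 1 + 1) then fA α (E (a :: t) (k + 1 + 1)) else 0)
          = (if condA t (k + 1) then fA α (E t (k + 1)) else 0) := by
        intro k
        simp only [condA, E, List.getD_cons_succ]
        norm_num
      have ht0 : (if condA t 0 then fA α (E t 0) else 0) = fA α (E t 0) := by
        simp [condA]
      rw [h0, h1, Finset.sum_congr rfl (fun k _ => h2 k), ht0]
      ring
    have hR : (∑ k ∈ Finset.range (a :: t).length,
          if condR (a :: t) k then fA α (E (a :: t) k - 1) else 0)
        = (∑ k ∈ Finset.range t.length, if condR t k then fA α (E t k - 1) else 0)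
          + (if (a = 1 ∨ E t 0 + 2 ≤ a) then fA α (a - 1) else 0) := by
      simp only [List.length_cons]
      rw [Finset.sum_range_succ' _ t.length]
      have h0 : (if condR (a :: t) 0 then fA α (E (a :: t) 0 - 1) else 0)
          = (if (a = 1 ∨ E t 0 + 2 ≤ a) then fA α (a - 1) else 0) := by
        simp only [condR, E, List.getD_cons_succ, List.getD_cons_zero]
        rfl
      have h2 : ∀ k, (if condR (a :: t) (k + 1) then fA α (E (a :: t) (k + 1) - 1) else 0)
          = (if condR t k then fA α (E t k - 1) else 0) := by
        intro k
        simp only [condR, E, List.getD_cons_succ]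
        rfl
      rw [h0, Finset.sum_congr rfl (fun k _ => h2 k)]
    rw [hA, hR]
    have hsum : ((a :: t).sum : ℝ) = (a : ℝ) + (t.sum : ℝ) := by
      simp
    rw [hsum]
    by_cases hc1 : E t 0 + 2 ≤ a
    · rw [if_pos hc1, if_pos (Or.inr hc1)]
      have hd := fA_diff α (show 2 ≤ a by omega)
      linear_combination ih' + hd
    · rw [if_neg hc1]
      by_cases hc2 : a = 1
      · subst hc2
        have h0 : E t 0 = 0 := by omega
        rw [if_pos (Or.inl rfl), h0]
        have hf0 : fA α 0 = α / 2 := by simp [fA]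
        have hf1 : fA α 1 = 2 + α := by norm_num [fA]
        rw [hf0, hf1]
        simp only [Nat.cast_one]
        linear_combination ih'
      · rw [if_neg (by push_neg; exact ⟨hc2, by omega⟩)]
        have he : E t 0 = a - 1 := by omega
        rw [he]
        have hd := fA_diff α (show 2 ≤ a by omega)
        linear_combination ih' + hd

/-! ### Assembly -/

lemma main (α : ℝ) (lam : SPart) :
    (∑ᶠ p ∈ {p : SPart × (ℕ × ℕ) | SPart.AddBox lam p.1 p.2}, qsq α p.2) -
      (∑ᶠ p ∈ {p : SPart × (ℕ × ℕ) | SPart.AddBox p.1 lam p.2}, qsq α p.2) =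
    2 * (lam.weight : ℝ) + α / 2 := by
  set m := lam.1.length with hm
  set SA : Set (SPart × (ℕ × ℕ)) := {p | SPart.AddBox lam p.1 p.2} with hSA
  set SR : Set (SPart × (ℕ × ℕ)) := {p | SPart.AddBox p.1 lam p.2} with hSR
  have hinjA : Set.InjOn Prod.snd SA := by
    rintro ⟨k1, b1⟩ h1 ⟨k2, b2⟩ h2 he
    simp only [Set.mem_setOf_eq, hSA] at h1 h2
    simp only at he
    subst he
    have hd : k1.diagram = k2.diagram := by rw [h1.2, h2.2]
    rw [diagram_inj hd]
  have hinjR : Set.InjOn Prod.snd SR := by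
    rintro ⟨k1, b1⟩ h1 ⟨k2, b2⟩ h2 he
    simp only [Set.mem_setOf_eq, hSR] at h1 h2
    simp only at he
    subst he
    have hd : k1.diagram = k2.diagram := by
      have e1 : insert b1 k1.diagram = insert b1 k2.diagram := by rw [← h1.2, ← h2.2]
      rw [← Set.insert_diff_self_of_notMem h1.1, ← Set.insert_diff_self_of_notMem h2.1, e1]
    rw [diagram_inj hd]
  have himA : Prod.snd '' SA =
      ↑(((Finset.range (m + 1)).filter (condA lam.1)).image
        (fun k => (k + 1, k + 1 + E lam.1 k))) := by
    ext b
    simp only [Set.mem_image, Set.mem_setOf_eq, Finset.coe_image, Finset.mem_coe,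
      Finset.mem_filter, Finset.mem_range, hSA]
    constructor
    · rintro ⟨p, hp, rfl⟩
      obtain ⟨k, hb, hc⟩ := add_box_shape hp
      exact ⟨k, ⟨Nat.lt_succ_of_le (condA_le hc), hc⟩, hb.symm⟩
    · rintro ⟨k, ⟨hk, hc⟩, rfl⟩
      obtain ⟨kap, hkap⟩ := exists_add hc
      exact ⟨(kap, _), hkap, rfl⟩
  have himR : Prod.snd '' SR =
      ↑(((Finset.range m).filter (condR lam.1)).image
        (fun k => (k + 1, k + E lam.1 k))) := by
    ext b
    simp only [Set.mem_image, Set.mem_setOf_eq, Finset.coe_image, Finset.mem_coe,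
      Finset.mem_filter, Finset.mem_range, hSR]
    constructor
    · rintro ⟨p, hp, rfl⟩
      obtain ⟨k, hb, hc⟩ := rem_box_shape hp
      exact ⟨k, ⟨condR_lt hc, hc⟩, hb.symm⟩
    · rintro ⟨k, ⟨hk, hc⟩, rfl⟩
      obtain ⟨mu, hmu⟩ := exists_rem hc
      exact ⟨(mu, _), hmu, rfl⟩
  have hfi : ∀ (s : Finset ℕ) (v : ℕ → ℕ), (∀ x ∈ s, ∀ y ∈ s, (fun k => (k + 1, k + v k)) x = (fun k => (k + 1, k + v k)) y → x = y) := by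
    intro s v x _ y _ h
    have := congrArg Prod.fst h
    simpa using this
  have hsumA : (∑ᶠ p ∈ SA, qsq α p.2)
      = ∑ k ∈ Finset.range (m + 1), if condA lam.1 k then fA α (E lam.1 k) else 0 := by
    rw [← finsum_mem_image (f := qsq α) hinjA, himA, finsum_mem_coe_finset,
      Finset.sum_image (by intro x hx y hy h; have := congrArg Prod.fst h; simpa using this),
      Finset.sum_congr rfl (fun k _ => qsq_add α k (E lam.1 k)), Finset.sum_filter]
  have hsumR : (∑ᶠ p ∈ SR, qsq α p.2)
      = ∑ k ∈ Finset.range m, if condR lam.1 k then fA α (E lam.1 k - 1) else 0 := by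
    rw [← finsum_mem_image (f := qsq α) hinjR, himR, finsum_mem_coe_finset,
      Finset.sum_image (by intro x hx y hy h; have := congrArg Prod.fst h; simpa using this),
      Finset.sum_congr rfl (fun k hk => qsq_rem α k (E lam.1 k)
        (by have := (Finset.mem_filter.1 hk).2; rcases this with h | h <;> omega)),
      Finset.sum_filter]
  rw [hsumA, hsumR]
  exact key α lam.1 lam.2.1 lam.2.2

end SPartProof

/-- for every strict partition `λ`,
`Σ_{κ ↘ λ} q_α(κ/λ)² − Σ_{μ ↗ λ} q_α(λ/μ)² = 2|λ| + α/2`. -/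
theorem statement2 (α : ℝ) (lam : SPart) :
    (∑ᶠ p ∈ {p : SPart × (ℕ × ℕ) | SPart.AddBox lam p.1 p.2}, qsq α p.2) -
      (∑ᶠ p ∈ {p : SPart × (ℕ × ℕ) | SPart.AddBox p.1 lam p.2}, qsq α p.2) =
    2 * (lam.weight : ℝ) + α / 2 :=
  SPartProof.main α lam
end

section
/- Let V be a complex vector space with a symmetric bilinear form ⟨·,·⟩, decomposed as V = V⁻ ⊕ V⁰ ⊕ V⁺ with V⁺ and V⁻ maximal isotropic and V⁰ = ℂv₀ with ⟨v₀,v₀⟩ = 2 and v₀ orthogonal to V⁺ ⊕ V⁻. Let Cl(V) be the Clifford algebra of (V, ⟨·,·⟩) and let F be a linear functional on Cl(V) with F(1) = 1 such that F(f₁⁺⋯f_p⁺ v₀^r f₁⁻⋯f_q⁻) = 0 whenever f_i⁺ ∈ V⁺, f_j⁻ ∈ V⁻, r ≥ 0, and at least one of p, q is nonzero. Then for any 2n elements f₁,...,f_{2n} ∈ V, F(f₁⋯f_{2n}) = Pf(A), where A is the 2n×2n skew-symmetric matrix with entries A_{kj} = F(f_k f_j) for k < j. -/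
open CliffordAlgebra

section Aux
variable {V : Type*} [AddCommGroup V] [Module ℂ V] (Q : QuadraticForm ℂ V)

lemma swap_single {a b : V} (h : QuadraticMap.polar (⇑Q) a b = 0) :
    ι Q a * ι Q b = -(ι Q b * ι Q a) :=
  eq_neg_of_add_eq_zero_left (by rw [ι_mul_ι_add_swap, h, map_zero])

lemma swap_list (v : V) (l : List V) (h : ∀ a ∈ l, QuadraticMap.polar (⇑Q) v a = 0) :
    ι Q v * (l.map (ι Q)).prod = ((-1:ℂ)^l.length) • ((l.map (ι Q)).prod * ι Q v) := by
  induction l with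
  | nil => simp
  | cons a l ih =>
    have ha : QuadraticMap.polar (⇑Q) v a = 0 := h a (List.mem_cons_self)
    have hl : ∀ b ∈ l, QuadraticMap.polar (⇑Q) v b = 0 := fun b hb => h b (List.mem_cons_of_mem a hb)
    simp only [List.map_cons, List.prod_cons, List.length_cons]
    rw [← mul_assoc, swap_single Q ha, neg_mul, mul_assoc, ih hl, mul_smul_comm, pow_succ]
    rw [mul_assoc]
    module

lemma swap_pow (v a : V) (r : ℕ) (h : QuadraticMap.polar (⇑Q) v a = 0) :
    ι Q a * (ι Q v)^r = ((-1:ℂ)^r) • ((ι Q v)^r * ι Q a) := by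
  induction r with
  | zero => simp
  | succ r ih =>
    rw [pow_succ, ← mul_assoc, pow_succ]
    have hsym : QuadraticMap.polar (⇑Q) a v = 0 := by rwa [QuadraticMap.polar_comm]
    calc ι Q a * (ι Q v)^r * ι Q v = ((-1:ℂ)^r) • ((ι Q v)^r * ι Q a) * ι Q v := by rw [ih]
    _ = ((-1:ℂ)^r) • ((ι Q v)^r * (ι Q a * ι Q v)) := by rw [smul_mul_assoc, mul_assoc]
    _ = ((-1:ℂ)^(r+1)) • ((ι Q v)^r * ι Q v * ι Q a) := by
        rw [swap_single Q hsym, mul_neg, smul_neg, ← mul_assoc, pow_succ, mul_smul,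
          neg_one_smul, smul_neg]


lemma moveLeft (n : ℕ) (g : Fin (n+1) → V) (w : V) :
    (List.ofFn fun i => ι Q (g i)).prod * ι Q w
      = ((-1:ℂ)^(n+1)) • (ι Q w * (List.ofFn fun i => ι Q (g i)).prod)
        + ∑ k : Fin (n+1), ((-1:ℂ)^n * (-1:ℂ)^(k:ℕ) * QuadraticMap.polar (⇑Q) (g k) w) •
            (List.ofFn fun i => ι Q (g (k.succAbove i))).prod := by
  induction n with
  | zero =>
    simp only [List.ofFn_succ, List.ofFn_zero, List.prod_cons, List.prod_nil, mul_one,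
      pow_one, pow_zero, one_mul, Finset.univ_unique, Finset.sum_singleton]
    rw [ι_mul_ι_comm, Algebra.algebraMap_eq_smul_one]
    simp
    abel
  | succ n ih =>
    have T := (List.ofFn fun i : Fin (n+1) => ι Q (g i.succ)).prod
    have hswap : ι Q (g 0) * (ι Q w * (List.ofFn fun i : Fin (n+1) => ι Q (g i.succ)).prod)
        = (QuadraticMap.polar (⇑Q) (g 0) w) •
            (List.ofFn fun i : Fin (n+1) => ι Q (g i.succ)).prod
          - ι Q w * (ι Q (g 0) * (List.ofFn fun i : Fin (n+1) => ι Q (g i.succ)).prod) := by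
      rw [← mul_assoc, ι_mul_ι_comm, sub_mul, Algebra.algebraMap_eq_smul_one, smul_mul_assoc,
        one_mul, mul_assoc]
    have hzero : (List.ofFn fun i : Fin (n+1) => ι Q (g ((0 : Fin (n+2)).succAbove i)))
        = (List.ofFn fun i : Fin (n+1) => ι Q (g i.succ)) := by
      simp [Fin.zero_succAbove]
    have hsucc : ∀ j : Fin (n+1),
        (List.ofFn fun i : Fin (n+1) => ι Q (g ((j.succ).succAbove i)))
          = ι Q (g 0) :: (List.ofFn fun i : Fin n => ι Q (g ((j.succAbove i).succ))) := by
      intro j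
      rw [List.ofFn_succ, Fin.succ_succAbove_zero]
      simp only [Fin.succ_succAbove_succ]
    have hterm : ∀ j : Fin (n+1),
        ((-1:ℂ)^(n+1) * (-1:ℂ)^(((j.succ : Fin (n+2))) : ℕ) *
            QuadraticMap.polar (⇑Q) (g j.succ) w) •
          (List.ofFn fun i : Fin (n+1) => ι Q (g ((j.succ).succAbove i))).prod
        = ι Q (g 0) * (((-1:ℂ)^n * (-1:ℂ)^(j:ℕ) *
            QuadraticMap.polar (⇑Q) (g j.succ) w) •
          (List.ofFn fun i : Fin n => ι Q (g (j.succAbove i).succ)).prod) := by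
      intro j
      rw [hsucc j, List.prod_cons, mul_smul_comm]
      congr 1
      rw [Fin.val_succ]
      ring
    conv_rhs => rw [Fin.sum_univ_succ]
    rw [Finset.sum_congr rfl (fun j _ => hterm j), hzero]
    rw [List.ofFn_succ, List.prod_cons, mul_assoc, ih (fun i => g i.succ), mul_add,
      Finset.mul_sum, mul_smul_comm, hswap]
    rw [smul_sub]
    simp only [Fin.val_zero, Fin.val_succ, pow_zero, Fin.succ_succAbove_succ]
    module


variable (v0 : V)

/-- normal ordered monomial -/
def mon (lp : List V) (r : ℕ) (lq : List V) : CliffordAlgebra Q :=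
  (lp.map (ι Q)).prod * (ι Q v0)^r * (lq.map (ι Q)).prod

lemma monCons (a : V) (lp : List V) (r : ℕ) (lq : List V) :
    mon Q v0 (a :: lp) r lq = ι Q a * mon Q v0 lp r lq := by
  simp [mon, mul_assoc]

lemma monSnoc (lp : List V) (r : ℕ) (lq : List V) (w : V) :
    mon Q v0 lp r (lq ++ [w]) = mon Q v0 lp r lq * ι Q w := by
  simp [mon, mul_assoc]

variable (Vp Vm : Submodule ℂ V)

/-- span of normal ordered monomials -/
def monSpan : Submodule ℂ (CliffordAlgebra Q) :=
  Submodule.span ℂ {x | ∃ lp r lq, (∀ a ∈ lp, a ∈ Vp) ∧ (∀ a ∈ lq, a ∈ Vm) ∧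
    x = mon Q v0 lp r lq}

lemma mon_mem (lp : List V) (r : ℕ) (lq : List V) (hp : ∀ a ∈ lp, a ∈ Vp)
    (hq : ∀ a ∈ lq, a ∈ Vm) : mon Q v0 lp r lq ∈ monSpan Q v0 Vp Vm :=
  Submodule.subset_span ⟨lp, r, lq, hp, hq, rfl⟩

variable (horth : ∀ v ∈ Vp ⊔ Vm, QuadraticMap.polar (⇑Q) v0 v = 0)

section
include horth

lemma leftVp {b : V} (hb : b ∈ Vp) {x : CliffordAlgebra Q} (hx : x ∈ monSpan Q v0 Vp Vm) :
    ι Q b * x ∈ monSpan Q v0 Vp Vm := by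
  induction hx using Submodule.span_induction with
  | mem x hxm =>
    obtain ⟨lp, r, lq, hp, hq, rfl⟩ := hxm
    have : ι Q b * mon Q v0 lp r lq = mon Q v0 (b :: lp) r lq := by
      simp [mon, mul_assoc]
    rw [this]
    exact mon_mem Q v0 Vp Vm _ r _ (List.forall_mem_cons.2 ⟨hb, hp⟩) hq
  | zero => simp
  | add x y _ _ hx hy => rw [mul_add]; exact add_mem hx hy
  | smul c x _ hx => rw [mul_smul_comm]; exact Submodule.smul_mem _ _ hx

lemma monV0left (lp : List V) (r : ℕ) (lq : List V) (hp : ∀ a ∈ lp, a ∈ Vp) :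
    ι Q v0 * mon Q v0 lp r lq = ((-1:ℂ)^lp.length) • mon Q v0 lp (r+1) lq := by
  unfold mon
  rw [← mul_assoc, ← mul_assoc, swap_list Q v0 lp
    (fun a ha => horth a (Submodule.mem_sup_left (hp a ha))), smul_mul_assoc,
    smul_mul_assoc]
  congr 1
  rw [mul_assoc ((lp.map (ι Q)).prod) (ι Q v0), ← pow_succ']

lemma monV0right (lp : List V) (r : ℕ) (lq : List V) (hq : ∀ a ∈ lq, a ∈ Vm) :
    mon Q v0 lp r lq * ι Q v0 = ((-1:ℂ)^lq.length) • mon Q v0 lp (r+1) lq := by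
  have h := swap_list Q v0 lq (fun a ha => horth a (Submodule.mem_sup_right (hq a ha)))
  have h2 : ((-1:ℂ)^lq.length) * ((-1:ℂ)^lq.length) = 1 := by
    rw [← pow_add]; exact Even.neg_one_pow ⟨lq.length, rfl⟩
  have h' : (lq.map (ι Q)).prod * ι Q v0
      = ((-1:ℂ)^lq.length) • (ι Q v0 * (lq.map (ι Q)).prod) := by
    rw [h, smul_smul, h2, one_smul]
  unfold mon
  rw [mul_assoc, h', mul_smul_comm]
  congr 1
  rw [← mul_assoc, mul_assoc ((lp.map (ι Q)).prod) (ι Q v0 ^ r) (ι Q v0), ← pow_succ]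

lemma leftV0 {x : CliffordAlgebra Q} (hx : x ∈ monSpan Q v0 Vp Vm) :
    ι Q v0 * x ∈ monSpan Q v0 Vp Vm := by
  induction hx using Submodule.span_induction with
  | mem x hxm =>
    obtain ⟨lp, r, lq, hp, hq, rfl⟩ := hxm
    rw [monV0left Q v0 Vp Vm horth lp r lq hp]
    exact Submodule.smul_mem _ _ (mon_mem Q v0 Vp Vm _ _ _ hp hq)
  | zero => simp
  | add x y _ _ hx hy => rw [mul_add]; exact add_mem hx hy
  | smul c x _ hx => rw [mul_smul_comm]; exact Submodule.smul_mem _ _ hx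

lemma leftVm_mon {b : V} (hb : b ∈ Vm) (lp : List V) (r : ℕ) (lq : List V)
    (hp : ∀ a ∈ lp, a ∈ Vp) (hq : ∀ a ∈ lq, a ∈ Vm) :
    ι Q b * mon Q v0 lp r lq ∈ monSpan Q v0 Vp Vm := by
  induction lp with
  | nil =>
    have hb0 : QuadraticMap.polar (⇑Q) v0 b = 0 := horth b (Submodule.mem_sup_right hb)
    have : ι Q b * mon Q v0 [] r lq = ((-1:ℂ)^r) • mon Q v0 [] r (b :: lq) := by
      unfold mon
      simp only [List.map_nil, List.prod_nil, one_mul, List.map_cons, List.prod_cons]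
      rw [← mul_assoc, swap_pow Q v0 b r hb0, smul_mul_assoc, mul_assoc]
    rw [this]
    exact Submodule.smul_mem _ _ (mon_mem Q v0 Vp Vm _ _ _ (by simp)
      (List.forall_mem_cons.2 ⟨hb, hq⟩))
  | cons a lp ih =>
    have ha : a ∈ Vp := hp a (List.mem_cons_self)
    have hp' : ∀ c ∈ lp, c ∈ Vp := fun c hc => hp c (List.mem_cons_of_mem a hc)
    have key : ι Q b * mon Q v0 (a :: lp) r lq
        = (QuadraticMap.polar (⇑Q) b a) • mon Q v0 lp r lq
          - ι Q a * (ι Q b * mon Q v0 lp r lq) := by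
      rw [monCons, ← mul_assoc, ι_mul_ι_comm, sub_mul, Algebra.algebraMap_eq_smul_one,
        smul_mul_assoc, one_mul, mul_assoc]
    rw [key]
    exact sub_mem (Submodule.smul_mem _ _ (mon_mem Q v0 Vp Vm _ _ _ hp' hq))
      (leftVp Q v0 Vp Vm horth ha (ih hp'))

lemma leftVm {b : V} (hb : b ∈ Vm) {x : CliffordAlgebra Q} (hx : x ∈ monSpan Q v0 Vp Vm) :
    ι Q b * x ∈ monSpan Q v0 Vp Vm := by
  induction hx using Submodule.span_induction with
  | mem x hxm =>
    obtain ⟨lp, r, lq, hp, hq, rfl⟩ := hxm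
    exact leftVm_mon Q v0 Vp Vm horth hb lp r lq hp hq
  | zero => simp
  | add x y _ _ hx hy => rw [mul_add]; exact add_mem hx hy
  | smul c x _ hx => rw [mul_smul_comm]; exact Submodule.smul_mem _ _ hx

lemma spanTop
    (hdec : ∀ v : V, ∃ a ∈ Vm, ∃ c : ℂ, ∃ b ∈ Vp, v = a + c • v0 + b)
    (x : CliffordAlgebra Q) : x ∈ monSpan Q v0 Vp Vm := by
  have hone : (1 : CliffordAlgebra Q) ∈ monSpan Q v0 Vp Vm := by
    have : (1 : CliffordAlgebra Q) = mon Q v0 [] 0 [] := by simp [mon]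
    rw [this]; exact mon_mem Q v0 Vp Vm _ _ _ (by simp) (by simp)
  have key : ∀ y : CliffordAlgebra Q, ∀ s ∈ monSpan Q v0 Vp Vm,
      y * s ∈ monSpan Q v0 Vp Vm := by
    intro y
    induction y using CliffordAlgebra.induction with
    | algebraMap c =>
      intro s hs
      rw [← Algebra.smul_def]
      exact Submodule.smul_mem _ _ hs
    | ι v =>
      intro s hs
      obtain ⟨a, ha, c, b, hb, rfl⟩ := hdec v
      rw [map_add, map_add, map_smul, add_mul, add_mul, smul_mul_assoc]
      exact add_mem (add_mem (leftVm Q v0 Vp Vm horth ha hs)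
        (Submodule.smul_mem _ _ (leftV0 Q v0 Vp Vm horth hs)))
        (leftVp Q v0 Vp Vm horth hb hs)
    | mul y z hy hz =>
      intro s hs
      rw [mul_assoc]
      exact hy _ (hz _ hs)
    | add y z hy hz =>
      intro s hs
      rw [add_mul]
      exact add_mem (hy _ hs) (hz _ hs)
  simpa using key x 1 hone

end

variable (F : CliffordAlgebra Q →ₗ[ℂ] ℂ)

/-- the vanishing hypothesis, in list form -/
lemma hFvan_list
    (hFvan : ∀ (p q r : ℕ) (fp : Fin p → Vp) (fm : Fin q → Vm), p ≠ 0 ∨ q ≠ 0 →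
      F ((List.ofFn fun i => ι Q (fp i : V)).prod * (ι Q v0) ^ r *
          (List.ofFn fun j => ι Q (fm j : V)).prod) = 0)
    (lp : List V) (r : ℕ) (lq : List V) (hp : ∀ a ∈ lp, a ∈ Vp) (hq : ∀ a ∈ lq, a ∈ Vm)
    (hne : lp ≠ [] ∨ lq ≠ []) : F (mon Q v0 lp r lq) = 0 := by
  have h1 : (List.ofFn fun i : Fin lp.length =>
      ι Q ((⟨lp.get i, hp _ (lp.get_mem _)⟩ : Vp) : V)) = lp.map (ι Q) := by
    simpa using List.ofFn_get_eq_map lp (ι Q)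
  have h2 : (List.ofFn fun j : Fin lq.length =>
      ι Q ((⟨lq.get j, hq _ (lq.get_mem _)⟩ : Vm) : V)) = lq.map (ι Q) := by
    simpa using List.ofFn_get_eq_map lq (ι Q)
  have := hFvan lp.length lq.length r
    (fun i => ⟨lp.get i, hp _ (lp.get_mem _)⟩)
    (fun j => ⟨lq.get j, hq _ (lq.get_mem _)⟩)
    (by rcases hne with h | h
        · exact Or.inl (by simpa using h)
        · exact Or.inr (by simpa using h))
  rw [h1, h2] at this
  exact this

section Fsec
variable (hFvanL : ∀ (lp : List V) (r : ℕ) (lq : List V), (∀ a ∈ lp, a ∈ Vp) →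
    (∀ a ∈ lq, a ∈ Vm) → (lp ≠ [] ∨ lq ≠ []) → F (mon Q v0 lp r lq) = 0)
  (hspan : ∀ x : CliffordAlgebra Q, x ∈ monSpan Q v0 Vp Vm)

include hFvanL hspan in
lemma F_mul_Vm (x : CliffordAlgebra Q) {w : V} (hw : w ∈ Vm) : F (x * ι Q w) = 0 := by
  induction hspan x using Submodule.span_induction with
  | mem x hxm =>
    obtain ⟨lp, r, lq, hp, hq, rfl⟩ := hxm
    rw [← monSnoc]
    exact hFvanL lp r (lq ++ [w]) hp
      (by intro a ha
          rcases List.mem_append.1 ha with h | h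
          · exact hq a h
          · rw [List.mem_singleton.1 h]; exact hw)
      (Or.inr (by simp))
  | zero => simp
  | add x y _ _ hx hy => rw [add_mul, map_add, hx, hy, add_zero]
  | smul c x _ hx => rw [smul_mul_assoc, map_smul, hx, smul_zero]

include hFvanL hspan in
lemma F_Vp_mul {w : V} (hw : w ∈ Vp) (x : CliffordAlgebra Q) : F (ι Q w * x) = 0 := by
  induction hspan x using Submodule.span_induction with
  | mem x hxm =>
    obtain ⟨lp, r, lq, hp, hq, rfl⟩ := hxm
    rw [← monCons]
    exact hFvanL (w :: lp) r lq (List.forall_mem_cons.2 ⟨hw, hp⟩) hq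
      (Or.inl (by simp))
  | zero => simp
  | add x y _ _ hx hy => rw [mul_add, map_add, hx, hy, add_zero]
  | smul c x _ hx => rw [mul_smul_comm, map_smul, hx, smul_zero]

include horth hFvanL hspan in
lemma F_v0_comm (x : CliffordAlgebra Q) : F (ι Q v0 * x) = F (x * ι Q v0) := by
  induction hspan x using Submodule.span_induction with
  | mem x hxm =>
    obtain ⟨lp, r, lq, hp, hq, rfl⟩ := hxm
    rw [monV0left Q v0 Vp Vm horth lp r lq hp, monV0right Q v0 Vp Vm horth lp r lq hq,
      map_smul, map_smul]
    rcases eq_or_ne lp [] with hlp | hlp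
    · rcases eq_or_ne lq [] with hlq | hlq
      · subst hlp; subst hlq; simp
      · rw [hFvanL lp (r+1) lq hp hq (Or.inr hlq), smul_zero, smul_zero]
    · rw [hFvanL lp (r+1) lq hp hq (Or.inl hlp), smul_zero, smul_zero]
  | zero => simp
  | add x y _ _ hx hy => rw [mul_add, add_mul, map_add, map_add, hx, hy]
  | smul c x _ hx => rw [mul_smul_comm, smul_mul_assoc, map_smul, map_smul, hx]


include horth hFvanL hspan in
lemma keyL (hF1 : F 1 = 1)
    (hdec : ∀ v : V, ∃ a ∈ Vm, ∃ c : ℂ, ∃ b ∈ Vp, v = a + c • v0 + b)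
    (t : ℕ) (g : Fin (2*t+1) → V) (w : V) :
    F ((List.ofFn fun i => ι Q (g i)).prod * ι Q w)
      = ∑ k : Fin (2*t+1), (-1:ℂ)^(k:ℕ) * F (ι Q (g k) * ι Q w) *
          F ((List.ofFn fun i => ι Q (g (k.succAbove i))).prod) := by
  obtain ⟨a, ha, c, b, hb, hw⟩ := hdec w
  have Falg : ∀ d : ℂ, ∀ x : CliffordAlgebra Q, F (d • x) = d * F x := fun d x => by
    rw [map_smul, smul_eq_mul]
  have pairVm : ∀ x : CliffordAlgebra Q, F (x * ι Q a) = 0 := fun x =>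
    F_mul_Vm Q v0 Vp Vm F hFvanL hspan x ha
  have pairVp : ∀ x : V, F (ι Q x * ι Q b) = QuadraticMap.polar (⇑Q) x b := by
    intro x
    rw [ι_mul_ι_comm, map_sub, F_Vp_mul Q v0 Vp Vm F hFvanL hspan hb,
      Algebra.algebraMap_eq_smul_one, Falg, hF1, mul_one, sub_zero]
  have pairV0 : ∀ x : V, F (ι Q x * ι Q v0) = QuadraticMap.polar (⇑Q) x v0 / 2 := by
    intro x
    have h1 : F (ι Q x * ι Q v0) + F (ι Q v0 * ι Q x) = QuadraticMap.polar (⇑Q) x v0 := by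
      rw [← map_add, ι_mul_ι_add_swap, Algebra.algebraMap_eq_smul_one, Falg, hF1, mul_one]
    rw [F_v0_comm Q v0 Vp Vm horth F hFvanL hspan (ι Q x)] at h1
    field_simp
    linear_combination h1
  have evensign : ((-1:ℂ)^(2*t)) = 1 := Even.neg_one_pow ⟨t, two_mul t⟩
  have oddsign : ((-1:ℂ)^(2*t+1)) = -1 := by rw [pow_succ, evensign, one_mul]
  set P := (List.ofFn fun i => ι Q (g i)).prod with hP
  have hml := fun w' => moveLeft Q (2*t) g w'
  have hB : F (P * ι Q b) = ∑ k : Fin (2*t+1), (-1:ℂ)^(k:ℕ) *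
      QuadraticMap.polar (⇑Q) (g k) b *
      F ((List.ofFn fun i => ι Q (g (k.succAbove i))).prod) := by
    rw [hml b, map_add, map_sum, Falg, oddsign, F_Vp_mul Q v0 Vp Vm F hFvanL hspan hb]
    simp only [Falg, evensign, one_mul]
    ring
  have h0 : F (P * ι Q v0) = (1/2) * ∑ k : Fin (2*t+1), (-1:ℂ)^(k:ℕ) *
      QuadraticMap.polar (⇑Q) (g k) v0 *
      F ((List.ofFn fun i => ι Q (g (k.succAbove i))).prod) := by
    have h1 : F (P * ι Q v0) = -F (ι Q v0 * P) + ∑ k : Fin (2*t+1), (-1:ℂ)^(k:ℕ) *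
        QuadraticMap.polar (⇑Q) (g k) v0 *
        F ((List.ofFn fun i => ι Q (g (k.succAbove i))).prod) := by
      rw [hml v0, map_add, map_sum, Falg, oddsign]
      simp only [Falg, evensign, one_mul]
      ring
    rw [F_v0_comm Q v0 Vp Vm horth F hFvanL hspan P] at h1
    linear_combination h1 / 2
  have hA : F (P * ι Q a) = 0 := pairVm P
  have hLHS : F (P * ι Q w) = F (P * ι Q a) + c * F (P * ι Q v0) + F (P * ι Q b) := by
    rw [hw]
    rw [map_add, map_add, map_smul, mul_add, mul_add, mul_smul_comm, map_add, map_add, Falg]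
  have hRHSk : ∀ k : Fin (2*t+1), (-1:ℂ)^(k:ℕ) * F (ι Q (g k) * ι Q w) *
        F ((List.ofFn fun i => ι Q (g (k.succAbove i))).prod)
      = c * ((1/2) * ((-1:ℂ)^(k:ℕ) * QuadraticMap.polar (⇑Q) (g k) v0 *
            F ((List.ofFn fun i => ι Q (g (k.succAbove i))).prod)))
        + (-1:ℂ)^(k:ℕ) * QuadraticMap.polar (⇑Q) (g k) b *
            F ((List.ofFn fun i => ι Q (g (k.succAbove i))).prod) := by
    intro k
    have hk : F (ι Q (g k) * ι Q w) = c * (QuadraticMap.polar (⇑Q) (g k) v0 / 2)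
        + QuadraticMap.polar (⇑Q) (g k) b := by
      rw [hw, map_add, map_add, map_smul, mul_add, mul_add, mul_smul_comm, map_add, map_add,
        Falg, pairVm, pairV0, pairVp, zero_add]
    rw [hk]
    ring
  rw [hLHS, hA, zero_add, hB, h0,
    Finset.sum_congr rfl (fun k _ => hRHSk k), Finset.sum_add_distrib, ← Finset.mul_sum,
    ← Finset.mul_sum]

end Fsec
end Aux

/-- The Pfaffian of a `2n × 2n` matrix, defined by the recursive expansion
`Pf(A) = Σ_{k=1}^{2n−1} (−1)^{k+1} A_{k,2n} · Pf(A with rows/columns k, 2n removed)`. -/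
def pfaffian {R : Type*} [CommRing R] : (n : ℕ) → Matrix (Fin (2 * n)) (Fin (2 * n)) R → R
  | 0, _ => 1
  | n + 1, A =>
      ∑ k : Fin (2 * n + 1),
        (-1 : R) ^ (k : ℕ) * A k.castSucc (Fin.last (2 * n + 1)) *
          pfaffian n (A.submatrix (fun i => (k.succAbove i).castSucc)
            (fun i => (k.succAbove i).castSucc))

/-- Wick's theorem: let `V = V⁻ ⊕ ℂv₀ ⊕ V⁺` with `V±` maximal
isotropic for the symmetric bilinear form `⟨u,w⟩ = polar Q u w`, `⟨v₀,v₀⟩ = 2`,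
`v₀ ⊥ (V⁺ ⊕ V⁻)`.  If `F : Cl(V) → ℂ` is linear with `F(1) = 1` and
`F(f₁⁺⋯f_p⁺ v₀^r f₁⁻⋯f_q⁻) = 0` whenever `p ≠ 0` or `q ≠ 0`, then
`F(f₁⋯f_{2n}) = Pf[F(f_k f_j)]`. -/
theorem statement8 {V : Type*} [AddCommGroup V] [Module ℂ V]
    (Q : QuadraticForm ℂ V) (Vp Vm : Submodule ℂ V) (v0 : V)
    (hdirect : DirectSum.IsInternal
      (fun i : Fin 3 => ![Vm, Submodule.span ℂ {v0}, Vp] i))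
    (hv0 : QuadraticMap.polar (⇑Q) v0 v0 = 2)
    (horth : ∀ v ∈ Vp ⊔ Vm, QuadraticMap.polar (⇑Q) v0 v = 0)
    (hisoP : ∀ u ∈ Vp, ∀ w ∈ Vp, QuadraticMap.polar (⇑Q) u w = 0)
    (hisoM : ∀ u ∈ Vm, ∀ w ∈ Vm, QuadraticMap.polar (⇑Q) u w = 0)
    (hmaxP : ∀ W : Submodule ℂ V, Vp ≤ W →
      (∀ u ∈ W, ∀ w ∈ W, QuadraticMap.polar (⇑Q) u w = 0) → W = Vp)
    (hmaxM : ∀ W : Submodule ℂ V, Vm ≤ W →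
      (∀ u ∈ W, ∀ w ∈ W, QuadraticMap.polar (⇑Q) u w = 0) → W = Vm)
    (F : CliffordAlgebra Q →ₗ[ℂ] ℂ) (hF1 : F 1 = 1)
    (hFvan : ∀ (p q r : ℕ) (fp : Fin p → Vp) (fm : Fin q → Vm), p ≠ 0 ∨ q ≠ 0 →
      F ((List.ofFn fun i => ι Q (fp i : V)).prod * (ι Q v0) ^ r *
          (List.ofFn fun j => ι Q (fm j : V)).prod) = 0)
    (n : ℕ) (f : Fin (2 * n) → V) :
    F (List.ofFn fun i => ι Q (f i)).prod =
      pfaffian n (Matrix.of fun k j : Fin (2 * n) =>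
        if k < j then F (ι Q (f k) * ι Q (f j))
        else if j < k then -F (ι Q (f j) * ι Q (f k)) else 0) := by
  have hdec : ∀ v : V, ∃ a ∈ Vm, ∃ c : ℂ, ∃ b ∈ Vp, v = a + c • v0 + b := by
    intro v
    have htop := hdirect.submodule_iSup_eq_top
    have hle : (⨆ i : Fin 3, ![Vm, Submodule.span ℂ {v0}, Vp] i)
        ≤ Vm ⊔ (Submodule.span ℂ {v0} ⊔ Vp) := by
      apply iSup_le
      intro i
      fin_cases i
      · exact le_sup_left
      · exact le_trans le_sup_left le_sup_right
      · exact le_trans le_sup_right le_sup_right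
    have hv : v ∈ Vm ⊔ (Submodule.span ℂ {v0} ⊔ Vp) := hle (htop ▸ Submodule.mem_top)
    rw [Submodule.mem_sup] at hv
    obtain ⟨a, ha, y, hy, hv⟩ := hv
    rw [Submodule.mem_sup] at hy
    obtain ⟨z, hz, b, hb, rfl⟩ := hy
    rw [Submodule.mem_span_singleton] at hz
    obtain ⟨c, rfl⟩ := hz
    exact ⟨a, ha, c, b, hb, by rw [← hv]; abel⟩
  have hFvanL := hFvan_list Q v0 Vp Vm F hFvan
  have hspan := spanTop Q v0 Vp Vm horth hdec
  induction n with
  | zero =>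
    rw [List.ofFn_zero, List.prod_nil, hF1]
    rfl
  | succ n ih =>
    show F (List.ofFn fun i : Fin (2*n+1+1) => ι Q (f i)).prod = _
    have hsplit : (List.ofFn fun i : Fin (2*n+1+1) => ι Q (f i)).prod
        = (List.ofFn fun i : Fin (2*n+1) => ι Q (f i.castSucc)).prod
            * ι Q (f (Fin.last (2*n+1))) := by
      rw [List.ofFn_succ', List.concat_eq_append,
        List.prod_append, List.prod_cons, List.prod_nil, mul_one]
    rw [hsplit,
      keyL Q v0 Vp Vm horth F hFvanL hspan hF1 hdec n (fun i => f i.castSucc)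
        (f (Fin.last (2*n+1)))]
    show _ = ∑ k : Fin (2*n+1), _
    apply Finset.sum_congr rfl
    intro k _
    have hentry : (Matrix.of fun k j : Fin (2 * (n+1)) =>
          if k < j then F (ι Q (f k) * ι Q (f j))
          else if j < k then -F (ι Q (f j) * ι Q (f k)) else 0)
            k.castSucc (Fin.last (2*n+1))
        = F (ι Q (f k.castSucc) * ι Q (f (Fin.last (2*n+1)))) := by
      simp only [Matrix.of_apply]
      rw [if_pos (Fin.castSucc_lt_last k)]
    rw [hentry]
    congr 1
    have e : Fin (2*n) → Fin (2*(n+1)) := fun i => (k.succAbove i).castSucc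
    have hmat : ((Matrix.of fun k j : Fin (2 * (n+1)) =>
          if k < j then F (ι Q (f k) * ι Q (f j))
          else if j < k then -F (ι Q (f j) * ι Q (f k)) else 0).submatrix
            (fun i : Fin (2*n) => (k.succAbove i).castSucc)
            (fun i : Fin (2*n) => (k.succAbove i).castSucc))
        = Matrix.of fun i j : Fin (2 * n) =>
            if i < j then F (ι Q (f (k.succAbove i).castSucc) * ι Q (f (k.succAbove j).castSucc))
            else if j < i then -F (ι Q (f (k.succAbove j).castSucc) * ι Q (f (k.succAbove i).castSucc))
            else 0 := by
      funext i j
      simp only [Matrix.submatrix_apply, Matrix.of_apply]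
      have hmono : ∀ i j : Fin (2*n), i < j ↔
          ((k.succAbove i).castSucc : Fin (2*(n+1))) < (k.succAbove j).castSucc := by
        intro i j
        rw [Fin.castSucc_lt_castSucc_iff, Fin.succAbove_lt_succAbove_iff]
      rcases lt_trichotomy i j with h | h | h
      · rw [if_pos ((hmono i j).1 h), if_pos h]
      · subst h
        rw [if_neg (lt_irrefl _), if_neg (lt_irrefl _), if_neg (lt_irrefl _),
          if_neg (lt_irrefl _)]
      · rw [if_neg (by rw [← hmono i j]; exact not_lt.2 h.le),
          if_pos ((hmono j i).1 h), if_neg (not_lt.2 h.le), if_pos h]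
    rw [hmat]
    exact ih (fun i => f (k.succAbove i).castSucc)
end

section
/- Let α > 0, 0 < ξ < 1, and let Φ(x,y) denote the static Pfaffian kernel Φ_{α,ξ}(x,y) = (−1)^{x∧0 + y∨0} Σ_{m=0}^∞ 2^{−δ(m)} φ_m(x) φ_m(−y), where φ_m = φ_m(·; α, ξ) satisfies the symmetry φ_m(x) = (−1)^{x+m} φ_{−m}(−x) and the closed-form (Christoffel–Darboux type) formula Φ(x,y) = (−1)^{x∧0+y∧0} (√(αξ)/(2(1−ξ))) · [φ₀(x)(φ₁(y) − φ_{−1}(y)) − φ₀(y)(φ₁(x) − φ_{−1}(x))]/(x+y). Then Φ satisfies the reduction identities: (1) Φ(x,−y) = Φ(y,−x) for all x,y ∈ ℤ; (2) Φ(x,−y) = −Φ(−x,y) for x ≠ y; (3) (x+y)·Φ(x,y) = (x−y)·Φ(x,−y) for all x,y ∈ ℤ. -/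
private lemma aux2' (A B C X Y p q u v d : ℝ) (hX : X*X=1) (hY : Y*Y=1) (hd : d ≠ 0) :
    A*B*Y*C*((p*(Y*v) - (Y*q)*u)/d) = -(A*B*X*C*(((X*p)*v - q*(X*u))/(-d))) := by
  field_simp
  linear_combination (A*B*C*(p*v - q*u))*hY - (A*B*C*(p*v - q*u))*hX

private lemma aux3' (A B C Y p q u v : ℝ) (hY : Y*Y=1) (x y : ℝ) (h1 : x + y ≠ 0)
    (h2 : x + -y ≠ 0) :
    (x+y) * ((A*B)*C*((p*v - q*u)/(x+y))) = (x-y) * ((A*B*Y)*C*((p*(Y*v) - (Y*q)*u)/(x + -y))) := by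
  field_simp
  linear_combination (-(A*B*C*(p*v-q*u)*(x-y)))*hY


/-- reduction identities for the static Pfaffian kernel
`Φ_{α,ξ}(x,y) = (−1)^{x∧0+y∨0} Σ_{m≥0} 2^{−δ(m)} φ_m(x) φ_m(−y)`, assuming the
symmetry `φ_m(x) = (−1)^{x+m} φ_{−m}(−x)` and the closed-form
(Christoffel–Darboux type) expression for `Φ` off the anti-diagonal
(the anti-diagonal values being determined by the series, which is the
L'Hospital limit of the closed form):
(1) `Φ(x,−y) = Φ(y,−x)`;
(2) `Φ(x,−y) = −Φ(−x,y)` for `x ≠ y`;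
(3) `(x+y)·Φ(x,y) = (x−y)·Φ(x,−y)`. -/
theorem statement19 (α ξ : ℝ) (hα : 0 < α) (hξ0 : 0 < ξ) (hξ1 : ξ < 1)
    (φ : ℤ → ℤ → ℝ)
    (hφsymm : ∀ m x : ℤ, φ m x = (-1 : ℝ) ^ (x + m) * φ (-m) (-x))
    (Φ : ℤ → ℤ → ℝ)
    (hseries : ∀ x y : ℤ, Φ x y =
      (-1 : ℝ) ^ (min x 0 + max y 0) *
        ∑' m : ℕ, (if m = 0 then (2 : ℝ)⁻¹ else 1) * φ (m : ℤ) x * φ (m : ℤ) (-y))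
    (hclosed : ∀ x y : ℤ, x + y ≠ 0 → Φ x y =
      (-1 : ℝ) ^ (min x 0 + min y 0) * (Real.sqrt (α * ξ) / (2 * (1 - ξ))) *
        ((φ 0 x * (φ 1 y - φ (-1) y) - φ 0 y * (φ 1 x - φ (-1) x)) /
          ((x : ℝ) + (y : ℝ)))) :
    (∀ x y : ℤ, Φ x (-y) = Φ y (-x)) ∧
    (∀ x y : ℤ, x ≠ y → Φ x (-y) = -Φ (-x) y) ∧
    (∀ x y : ℤ, ((x : ℝ) + (y : ℝ)) * Φ x y = ((x : ℝ) - (y : ℝ)) * Φ x (-y)) := by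
  have hneg : (-1 : ℝ) ≠ 0 := by norm_num
  have key : ∀ m n k : ℤ, m = n + 2 * k → (-1:ℝ)^m = (-1:ℝ)^n := by
    intro m n k hk
    subst hk
    rw [zpow_add₀ hneg, zpow_mul]
    norm_num
  have hsq : ∀ t : ℤ, (-1:ℝ)^t * (-1:ℝ)^t = 1 := by
    intro t
    rw [← zpow_add₀ hneg, key (t + t) 0 t (by ring)]
    norm_num
  have hφ0 : ∀ x : ℤ, φ 0 (-x) = (-1:ℝ)^x * φ 0 x := by
    intro x
    have h := hφsymm 0 x
    simp only [add_zero, neg_zero] at h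
    rw [h, ← mul_assoc, hsq, one_mul]
  have hψ : ∀ x : ℤ, φ 1 (-x) - φ (-1) (-x) = (-1:ℝ)^x * (φ 1 x - φ (-1) x) := by
    intro x
    have h1 := hφsymm 1 x
    have h2 := hφsymm (-1) x
    simp only [neg_neg] at h1 h2
    have e1 : (-1:ℝ)^(x+1) = -(-1:ℝ)^x := by
      rw [zpow_add₀ hneg, zpow_one, mul_neg_one]
    have e2 : (-1:ℝ)^(x+(-1)) = -(-1:ℝ)^x := by
      rw [key (x + (-1)) (x + 1) (-1) (by ring), e1]
    rw [h1, h2, e1, e2]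
    linear_combination (φ (-1) (-x) - φ 1 (-x)) * hsq x
  have hdiag : ∀ x : ℤ, x ≠ 0 → Φ x x = 0 := by
    intro x hx
    rw [hclosed x x (by omega), sub_self, zero_div, mul_zero]
  refine ⟨?_, ?_, ?_⟩
  · -- (1)
    intro x y
    rw [hseries x (-y), hseries y (-x)]
    simp only [neg_neg]
    have hm1 : max (-y) 0 = -(min y 0) := by omega
    have hm2 : max (-x) 0 = -(min x 0) := by omega
    rw [hm1, hm2,
      key (min x 0 + -(min y 0)) (min y 0 + -(min x 0)) (min x 0 - min y 0) (by ring)]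
    congr 1
    exact tsum_congr fun m => by ring
  · -- (2)
    intro x y hxy
    have hd1 : x + (-y) ≠ 0 := by omega
    have hd2 : (-x) + y ≠ 0 := by omega
    rw [hclosed x (-y) hd1, hclosed (-x) y hd2, hφ0 x, hφ0 y, hψ x, hψ y]
    have hs1 : (-1:ℝ)^(min x 0 + min (-y) 0)
        = (-1:ℝ)^(min x 0) * (-1:ℝ)^(min y 0) * (-1:ℝ)^y := by
      have hm : min (-y) 0 = min y 0 - y := by omega
      rw [hm, key (min x 0 + (min y 0 - y)) (min x 0 + min y 0 + y) (-y) (by ring),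
        zpow_add₀ hneg, zpow_add₀ hneg]
    have hs2 : (-1:ℝ)^(min (-x) 0 + min y 0)
        = (-1:ℝ)^(min x 0) * (-1:ℝ)^(min y 0) * (-1:ℝ)^x := by
      have hm : min (-x) 0 = min x 0 - x := by omega
      rw [hm, key (min x 0 - x + min y 0) (min x 0 + min y 0 + x) (-x) (by ring),
        zpow_add₀ hneg, zpow_add₀ hneg]
    rw [hs1, hs2]
    push_cast
    have hdr : (x:ℝ) + -(y:ℝ) ≠ 0 := by
      intro h
      apply hxy
      have : (x:ℝ) = y := by linarith
      exact_mod_cast this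
    have hrw : (-(x:ℝ)) + (y:ℝ) = -((x:ℝ) + -(y:ℝ)) := by ring
    rw [hrw]
    exact aux2' _ _ _ _ _ _ _ _ _ _ (hsq x) (hsq y) hdr
  · -- (3)
    intro x y
    by_cases hxy : x = y
    · subst hxy
      by_cases hx0 : x = 0
      · subst hx0; norm_num
      · rw [hdiag x hx0]
        norm_num
    · by_cases hsum : x + y = 0
      · have hyx : y = -x := by omega
        subst hyx
        have hx0 : x ≠ 0 := by omega
        simp only [neg_neg]
        rw [hdiag x hx0]
        push_cast
        ring
      · have hd2 : x + (-y) ≠ 0 := by omega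
        rw [hclosed x y hsum, hclosed x (-y) hd2, hφ0 y, hψ y]
        have hs1 : (-1:ℝ)^(min x 0 + min (-y) 0)
            = (-1:ℝ)^(min x 0) * (-1:ℝ)^(min y 0) * (-1:ℝ)^y := by
          have hm : min (-y) 0 = min y 0 - y := by omega
          rw [hm, key (min x 0 + (min y 0 - y)) (min x 0 + min y 0 + y) (-y) (by ring),
            zpow_add₀ hneg, zpow_add₀ hneg]
        have hs0 : (-1:ℝ)^(min x 0 + min y 0)
            = (-1:ℝ)^(min x 0) * (-1:ℝ)^(min y 0) := zpow_add₀ hneg _ _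
        rw [hs1, hs0]
        push_cast
        have hdr : (x:ℝ) + (y:ℝ) ≠ 0 := by
          intro h
          apply hsum
          have : ((x + y : ℤ) : ℝ) = 0 := by push_cast; linarith
          exact_mod_cast this
        have hdr2 : (x:ℝ) + -(y:ℝ) ≠ 0 := by
          intro h
          apply hxy
          have : (x:ℝ) = y := by linarith
          exact_mod_cast this
        exact aux3' _ _ _ _ _ _ _ _ (hsq y) _ _ hdr hdr2
end
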